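/- arXiv:1701.07050 — 2 statements merged into one kernel-verified Lean document; each statement's English description precedes it below -/
import Mathlib

section
/- Under the rank condition: B₁M₁ = B₁, B₂M₁ = B₂N₁ = B₂, B₁Y = B₂Y = I_G, C₁Y = 0, C₁X₁ = 0, C₁P̄[M₁Y] = 0, C₁M₁ = C₁M̄[M₁Y] = C₁, M₁Ψ₀M₁ = M₁Ψ₀ = Ψ₀M₁ = Ψ₀; consequently β̃ − β̂ = C₁y = C₁(M₁y) and (β̃−β̂)ᵀΔ̂⁻¹(β̃−β̂) = yᵀΨ₀y = (M₁y)ᵀΨ₀(M₁y). -/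
open Matrix

variable {T G k₁ k₂ : ℕ}

/-- Orthogonal projection `P̄[A] = A(AᵀA)⁻¹Aᵀ` onto the column space of `A`. -/
noncomputable def projM {n : Type*} [Fintype n] [DecidableEq n]
    (A : Matrix (Fin T) n ℝ) : Matrix (Fin T) (Fin T) ℝ :=
  A * (Aᵀ * A)⁻¹ * Aᵀ

/-- The annihilator `M̄[A] = I - P̄[A]`. -/
noncomputable def annM {n : Type*} [Fintype n] [DecidableEq n]
    (A : Matrix (Fin T) n ℝ) : Matrix (Fin T) (Fin T) ℝ :=
  1 - projM A

noncomputable def M1 (X₁ : Matrix (Fin T) (Fin k₁) ℝ) : Matrix (Fin T) (Fin T) ℝ :=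
  annM X₁

noncomputable def Pm (X₁ : Matrix (Fin T) (Fin k₁) ℝ) (X₂ : Matrix (Fin T) (Fin k₂) ℝ) :
    Matrix (Fin T) (Fin T) ℝ :=
  projM (fromCols X₁ X₂)

noncomputable def Mm (X₁ : Matrix (Fin T) (Fin k₁) ℝ) (X₂ : Matrix (Fin T) (Fin k₂) ℝ) :
    Matrix (Fin T) (Fin T) ℝ :=
  annM (fromCols X₁ X₂)

noncomputable def N1 (X₁ : Matrix (Fin T) (Fin k₁) ℝ) (X₂ : Matrix (Fin T) (Fin k₂) ℝ) :
    Matrix (Fin T) (Fin T) ℝ :=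
  M1 X₁ * Pm X₁ X₂

noncomputable def B1 (Y : Matrix (Fin T) (Fin G) ℝ) (X₁ : Matrix (Fin T) (Fin k₁) ℝ) :
    Matrix (Fin G) (Fin T) ℝ :=
  (Yᵀ * M1 X₁ * Y)⁻¹ * (Yᵀ * M1 X₁)

noncomputable def B2 (Y : Matrix (Fin T) (Fin G) ℝ) (X₁ : Matrix (Fin T) (Fin k₁) ℝ)
    (X₂ : Matrix (Fin T) (Fin k₂) ℝ) : Matrix (Fin G) (Fin T) ℝ :=
  (Yᵀ * N1 X₁ X₂ * Y)⁻¹ * (Yᵀ * N1 X₁ X₂)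

noncomputable def C1 (Y : Matrix (Fin T) (Fin G) ℝ) (X₁ : Matrix (Fin T) (Fin k₁) ℝ)
    (X₂ : Matrix (Fin T) (Fin k₂) ℝ) : Matrix (Fin G) (Fin T) ℝ :=
  B2 Y X₁ X₂ - B1 Y X₁

/-- OLS estimator `β̂`. -/
noncomputable def betaOLS (y : Fin T → ℝ) (Y : Matrix (Fin T) (Fin G) ℝ)
    (X₁ : Matrix (Fin T) (Fin k₁) ℝ) : Fin G → ℝ :=
  B1 Y X₁ *ᵥ y

/-- 2SLS estimator `β̃`. -/
noncomputable def beta2S (y : Fin T → ℝ) (Y : Matrix (Fin T) (Fin G) ℝ)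
    (X₁ : Matrix (Fin T) (Fin k₁) ℝ) (X₂ : Matrix (Fin T) (Fin k₂) ℝ) : Fin G → ℝ :=
  B2 Y X₁ X₂ *ᵥ y

noncomputable def OmIV (Y : Matrix (Fin T) (Fin G) ℝ) (X₁ : Matrix (Fin T) (Fin k₁) ℝ)
    (X₂ : Matrix (Fin T) (Fin k₂) ℝ) : Matrix (Fin G) (Fin G) ℝ :=
  (T : ℝ)⁻¹ • (Yᵀ * N1 X₁ X₂ * Y)

noncomputable def OmLS (Y : Matrix (Fin T) (Fin G) ℝ) (X₁ : Matrix (Fin T) (Fin k₁) ℝ) :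
    Matrix (Fin G) (Fin G) ℝ :=
  (T : ℝ)⁻¹ • (Yᵀ * M1 X₁ * Y)

noncomputable def SigV (Y : Matrix (Fin T) (Fin G) ℝ) (X₁ : Matrix (Fin T) (Fin k₁) ℝ)
    (X₂ : Matrix (Fin T) (Fin k₂) ℝ) : Matrix (Fin G) (Fin G) ℝ :=
  (T : ℝ)⁻¹ • (Yᵀ * Mm X₁ X₂ * Y)

noncomputable def Dhat (Y : Matrix (Fin T) (Fin G) ℝ) (X₁ : Matrix (Fin T) (Fin k₁) ℝ)
    (X₂ : Matrix (Fin T) (Fin k₂) ℝ) : Matrix (Fin G) (Fin G) ℝ :=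
  (OmIV Y X₁ X₂)⁻¹ - (OmLS Y X₁)⁻¹

noncomputable def Psi0 (Y : Matrix (Fin T) (Fin G) ℝ) (X₁ : Matrix (Fin T) (Fin k₁) ℝ)
    (X₂ : Matrix (Fin T) (Fin k₂) ℝ) : Matrix (Fin T) (Fin T) ℝ :=
  (C1 Y X₁ X₂)ᵀ * (Dhat Y X₁ X₂)⁻¹ * C1 Y X₁ X₂

noncomputable def N2 (Y : Matrix (Fin T) (Fin G) ℝ) (X₁ : Matrix (Fin T) (Fin k₁) ℝ)
    (X₂ : Matrix (Fin T) (Fin k₂) ℝ) : Matrix (Fin T) (Fin T) ℝ :=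
  1 - M1 X₁ * Y * B2 Y X₁ X₂

noncomputable def Lam1 (Y : Matrix (Fin T) (Fin G) ℝ) (X₁ : Matrix (Fin T) (Fin k₁) ℝ)
    (X₂ : Matrix (Fin T) (Fin k₂) ℝ) : Matrix (Fin T) (Fin T) ℝ :=
  (T : ℝ)⁻¹ • (N1 X₁ X₂ * annM (N1 X₁ X₂ * Y) * N1 X₁ X₂)

noncomputable def Lam2 (Y : Matrix (Fin T) (Fin G) ℝ) (X₁ : Matrix (Fin T) (Fin k₁) ℝ)
    (X₂ : Matrix (Fin T) (Fin k₂) ℝ) : Matrix (Fin T) (Fin T) ℝ :=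
  M1 X₁ * ((T : ℝ)⁻¹ • annM (M1 X₁ * Y) - Psi0 Y X₁ X₂) * M1 X₁

noncomputable def Lam3 (Y : Matrix (Fin T) (Fin G) ℝ) (X₁ : Matrix (Fin T) (Fin k₁) ℝ)
    (X₂ : Matrix (Fin T) (Fin k₂) ℝ) : Matrix (Fin T) (Fin T) ℝ :=
  (T : ℝ)⁻¹ • (M1 X₁ * (N2 Y X₁ X₂)ᵀ * N2 Y X₁ X₂ * M1 X₁)

noncomputable def Lam4 (Y : Matrix (Fin T) (Fin G) ℝ) (X₁ : Matrix (Fin T) (Fin k₁) ℝ) :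
    Matrix (Fin T) (Fin T) ℝ :=
  (T : ℝ)⁻¹ • (M1 X₁ * annM (M1 X₁ * Y) * M1 X₁)

def Ybar (Y : Matrix (Fin T) (Fin G) ℝ) (X₁ : Matrix (Fin T) (Fin k₁) ℝ) :
    Matrix (Fin T) (Fin G ⊕ Fin k₁) ℝ :=
  fromCols Y X₁

def Zfull (Y : Matrix (Fin T) (Fin G) ℝ) (X₁ : Matrix (Fin T) (Fin k₁) ℝ)
    (X₂ : Matrix (Fin T) (Fin k₂) ℝ) : Matrix (Fin T) (Fin G ⊕ (Fin k₁ ⊕ Fin k₂)) ℝ :=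
  fromCols Y (fromCols X₁ X₂)

noncomputable def PsiR (Y : Matrix (Fin T) (Fin G) ℝ) (X₁ : Matrix (Fin T) (Fin k₁) ℝ)
    (X₂ : Matrix (Fin T) (Fin k₂) ℝ) : Matrix (Fin T) (Fin T) ℝ :=
  (T : ℝ)⁻¹ • (annM (Ybar Y X₁) - annM (Zfull Y X₁ X₂))

noncomputable def LamR (Y : Matrix (Fin T) (Fin G) ℝ) (X₁ : Matrix (Fin T) (Fin k₁) ℝ)
    (X₂ : Matrix (Fin T) (Fin k₂) ℝ) : Matrix (Fin T) (Fin T) ℝ :=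
  (T : ℝ)⁻¹ • annM (Zfull Y X₁ X₂)

/-- `σ̂² = (1/T)(y−Yβ̂)ᵀM₁(y−Yβ̂)`. -/
noncomputable def sigHat2 (y : Fin T → ℝ) (Y : Matrix (Fin T) (Fin G) ℝ)
    (X₁ : Matrix (Fin T) (Fin k₁) ℝ) : ℝ :=
  (T : ℝ)⁻¹ * ((y - Y *ᵥ betaOLS y Y X₁) ⬝ᵥ (M1 X₁ *ᵥ (y - Y *ᵥ betaOLS y Y X₁)))

/-- `σ̃² = (1/T)(y−Yβ̃)ᵀM₁(y−Yβ̃)`. -/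
noncomputable def sigTil2 (y : Fin T → ℝ) (Y : Matrix (Fin T) (Fin G) ℝ)
    (X₁ : Matrix (Fin T) (Fin k₁) ℝ) (X₂ : Matrix (Fin T) (Fin k₂) ℝ) : ℝ :=
  (T : ℝ)⁻¹ * ((y - Y *ᵥ beta2S y Y X₁ X₂) ⬝ᵥ (M1 X₁ *ᵥ (y - Y *ᵥ beta2S y Y X₁ X₂)))

/-- `σ̃₁² = (1/T)(y−Yβ̃)ᵀN₁(y−Yβ̃)`. -/
noncomputable def sigTil1sq (y : Fin T → ℝ) (Y : Matrix (Fin T) (Fin G) ℝ)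
    (X₁ : Matrix (Fin T) (Fin k₁) ℝ) (X₂ : Matrix (Fin T) (Fin k₂) ℝ) : ℝ :=
  (T : ℝ)⁻¹ * ((y - Y *ᵥ beta2S y Y X₁ X₂) ⬝ᵥ (N1 X₁ X₂ *ᵥ (y - Y *ᵥ beta2S y Y X₁ X₂)))

/-- `σ̃₂² = σ̂² − (β̃−β̂)ᵀΔ̂⁻¹(β̃−β̂)`. -/
noncomputable def sigTil2sq (y : Fin T → ℝ) (Y : Matrix (Fin T) (Fin G) ℝ)
    (X₁ : Matrix (Fin T) (Fin k₁) ℝ) (X₂ : Matrix (Fin T) (Fin k₂) ℝ) : ℝ :=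
  sigHat2 y Y X₁ -
    (beta2S y Y X₁ X₂ - betaOLS y Y X₁) ⬝ᵥ
      ((Dhat Y X₁ X₂)⁻¹ *ᵥ (beta2S y Y X₁ X₂ - betaOLS y Y X₁))

/-- The rank condition: `X₁`, `X = [X₁, X₂]`, `[Y, X]` and `[P̄[X]Y, X₁]` all have
full column rank. -/
def RankCond (Y : Matrix (Fin T) (Fin G) ℝ) (X₁ : Matrix (Fin T) (Fin k₁) ℝ)
    (X₂ : Matrix (Fin T) (Fin k₂) ℝ) : Prop :=
  X₁.rank = k₁ ∧ (fromCols X₁ X₂).rank = k₁ + k₂ ∧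
    (fromCols Y (fromCols X₁ X₂)).rank = G + (k₁ + k₂) ∧
    (fromCols (Pm X₁ X₂ * Y) X₁).rank = G + k₁


section Helpers

variable {T : ℕ}

lemma projM_mul_self {n : Type*} [Fintype n] [DecidableEq n] {A : Matrix (Fin T) n ℝ}
    (hu : IsUnit (Aᵀ * A)) : projM A * A = A := by
  have h : (Aᵀ * A)⁻¹ * (Aᵀ * A) = 1 :=
    nonsing_inv_mul _ ((isUnit_iff_isUnit_det _).mp hu)
  calc projM A * A = A * ((Aᵀ * A)⁻¹ * (Aᵀ * A)) := by
        simp only [projM, Matrix.mul_assoc]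
    _ = A := by rw [h, Matrix.mul_one]

lemma projM_transpose {n : Type*} [Fintype n] [DecidableEq n] {A : Matrix (Fin T) n ℝ} :
    (projM A)ᵀ = projM A := by
  have h1 : ((Aᵀ * A)⁻¹)ᵀ = (Aᵀ * A)⁻¹ := by
    rw [transpose_nonsing_inv, transpose_mul, transpose_transpose]
  simp only [projM, transpose_mul, transpose_transpose, h1, Matrix.mul_assoc]

lemma projM_idem {n : Type*} [Fintype n] [DecidableEq n] {A : Matrix (Fin T) n ℝ}
    (hu : IsUnit (Aᵀ * A)) : projM A * projM A = projM A := by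
  calc projM A * projM A = (projM A * A) * (Aᵀ * A)⁻¹ * Aᵀ := by
        simp only [projM, Matrix.mul_assoc]
    _ = projM A := by rw [projM_mul_self hu, projM]

lemma annM_mul_self {n : Type*} [Fintype n] [DecidableEq n] {A : Matrix (Fin T) n ℝ}
    (hu : IsUnit (Aᵀ * A)) : annM A * A = 0 := by
  rw [annM, Matrix.sub_mul, Matrix.one_mul, projM_mul_self hu, sub_self]

lemma annM_transpose {n : Type*} [Fintype n] [DecidableEq n] {A : Matrix (Fin T) n ℝ} :
    (annM A)ᵀ = annM A := by
  rw [annM, transpose_sub, transpose_one, projM_transpose]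

lemma annM_idem {n : Type*} [Fintype n] [DecidableEq n] {A : Matrix (Fin T) n ℝ}
    (hu : IsUnit (Aᵀ * A)) : annM A * annM A = annM A := by
  simp only [annM, Matrix.sub_mul, Matrix.mul_sub, Matrix.one_mul, Matrix.mul_one,
    projM_idem hu]
  abel

lemma inj_of_ker {m n : Type*} [Fintype n] {A : Matrix m n ℝ}
    (h : ∀ v, A *ᵥ v = 0 → v = 0) : Function.Injective A.mulVec := by
  intro a b hab
  have h0 : A *ᵥ (a - b) = 0 := by rw [mulVec_sub, hab, sub_self]
  exact sub_eq_zero.mp (h _ h0)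

lemma ker_of_inj {m n : Type*} [Fintype n] {A : Matrix m n ℝ}
    (h : Function.Injective A.mulVec) : ∀ v, A *ᵥ v = 0 → v = 0 :=
  fun v hv => h (by rw [hv, mulVec_zero])

lemma inj_of_rank {m n : Type*} [Fintype m] [Fintype n] [DecidableEq n]
    {A : Matrix m n ℝ} (h : A.rank = Fintype.card n) :
    Function.Injective A.mulVec := by
  have h1 := LinearMap.finrank_range_add_finrank_ker A.mulVecLin
  rw [Module.finrank_fintype_fun_eq_card] at h1
  have hker : Module.finrank ℝ (LinearMap.ker A.mulVecLin) = 0 := by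
    have h2 : A.rank = Module.finrank ℝ (LinearMap.range A.mulVecLin) := rfl
    omega
  have hbot := LinearMap.ker_eq_bot.mp (Submodule.finrank_eq_zero.mp hker)
  intro a b hab
  exact hbot (by simpa [mulVecLin_apply] using hab)

lemma isUnit_tmul_of_rank {m n : Type*} [Fintype m] [Fintype n] [DecidableEq n]
    {A : Matrix m n ℝ} (h : A.rank = Fintype.card n) : IsUnit (Aᵀ * A) :=
  mulVec_injective_iff_isUnit.mp (inj_of_rank (by rw [rank_transpose_mul_self, h]))

/-- Key invertibility: if `[A, B]` has independent columns and `BᵀB` is invertible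
then `Aᵀ M̄[B] A` is invertible. -/
lemma isUnit_quad {m n : Type*} [Fintype m] [DecidableEq m] [Fintype n] [DecidableEq n]
    (A : Matrix (Fin T) m ℝ) (B : Matrix (Fin T) n ℝ) (hB : IsUnit (Bᵀ * B))
    (hinj : Function.Injective (fromCols A B).mulVec) :
    IsUnit (Aᵀ * annM B * A) := by
  set M := annM B with hM
  have hMt : Mᵀ = M := annM_transpose
  have hMi : M * M = M := annM_idem hB
  have htr : (M * A)ᵀ * (M * A) = Aᵀ * M * A := by
    rw [transpose_mul, hMt, Matrix.mul_assoc Aᵀ, ← Matrix.mul_assoc M, hMi,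
      ← Matrix.mul_assoc]
  apply mulVec_injective_iff_isUnit.mp
  apply inj_of_ker
  intro v hv
  have key : (M * A) *ᵥ v = 0 := by
    have h3 : ((M * A) *ᵥ v) ⬝ᵥ ((M * A) *ᵥ v) = 0 := by
      calc ((M * A) *ᵥ v) ⬝ᵥ ((M * A) *ᵥ v)
          = (v ᵥ* (M * A)ᵀ) ⬝ᵥ ((M * A) *ᵥ v) := by rw [vecMul_transpose]
        _ = v ⬝ᵥ ((M * A)ᵀ *ᵥ ((M * A) *ᵥ v)) := (dotProduct_mulVec _ _ _).symm
        _ = v ⬝ᵥ ((Aᵀ * M * A) *ᵥ v) := by rw [mulVec_mulVec, htr]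
        _ = 0 := by rw [hv, dotProduct_zero]
    exact dotProduct_self_eq_zero.mp h3
  set w := ((Bᵀ * B)⁻¹ * Bᵀ) *ᵥ (A *ᵥ v) with hw
  have h4 : A *ᵥ v = (projM B * A) *ᵥ v := by
    have h5 := key
    rw [hM, annM, Matrix.sub_mul, Matrix.one_mul, sub_mulVec] at h5
    exact (sub_eq_zero.mp h5)
  have hAv : A *ᵥ v = B *ᵥ w := by
    rw [h4, hw]
    simp only [mulVec_mulVec]
    congr 1
    simp only [projM, Matrix.mul_assoc]
  have hz : fromCols A B *ᵥ Sum.elim v (-w) = 0 := by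
    rw [fromCols_mulVec_sumElim, mulVec_neg, hAv, add_neg_cancel]
  have h6 := ker_of_inj hinj _ hz
  funext i
  exact congrFun h6 (Sum.inl i)

end Helpers

/-- **Properties of the exogeneity-statistic components.**  Under the rank condition:
`B₁M₁ = B₁`, `B₂M₁ = B₂N₁ = B₂`, `B₁Y = B₂Y = I_G`, `C₁Y = 0`, `C₁X₁ = 0`,
`C₁P̄[M₁Y] = 0`, `C₁M₁ = C₁M̄[M₁Y] = C₁`, `M₁Ψ₀M₁ = M₁Ψ₀ = Ψ₀M₁ = Ψ₀`; consequently
`β̃ − β̂ = C₁y = C₁(M₁y)` and `(β̃−β̂)ᵀΔ̂⁻¹(β̃−β̂) = yᵀΨ₀y = (M₁y)ᵀΨ₀(M₁y)`. -/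

theorem stmt5 {T G k₁ k₂ : ℕ}
    (hT : 0 < T) (hG : 0 < G) (hk₁ : 0 < k₁) (hk₂ : 0 < k₂)
    (y : Fin T → ℝ) (Y : Matrix (Fin T) (Fin G) ℝ)
    (X₁ : Matrix (Fin T) (Fin k₁) ℝ) (X₂ : Matrix (Fin T) (Fin k₂) ℝ)
    (hrank : RankCond Y X₁ X₂) :
    B1 Y X₁ * M1 X₁ = B1 Y X₁ ∧
    B2 Y X₁ X₂ * M1 X₁ = B2 Y X₁ X₂ ∧
    B2 Y X₁ X₂ * N1 X₁ X₂ = B2 Y X₁ X₂ ∧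
    B1 Y X₁ * Y = 1 ∧
    B2 Y X₁ X₂ * Y = 1 ∧
    C1 Y X₁ X₂ * Y = 0 ∧
    C1 Y X₁ X₂ * X₁ = 0 ∧
    C1 Y X₁ X₂ * projM (M1 X₁ * Y) = 0 ∧
    C1 Y X₁ X₂ * M1 X₁ = C1 Y X₁ X₂ ∧
    C1 Y X₁ X₂ * annM (M1 X₁ * Y) = C1 Y X₁ X₂ ∧
    M1 X₁ * Psi0 Y X₁ X₂ * M1 X₁ = Psi0 Y X₁ X₂ ∧
    M1 X₁ * Psi0 Y X₁ X₂ = Psi0 Y X₁ X₂ ∧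
    Psi0 Y X₁ X₂ * M1 X₁ = Psi0 Y X₁ X₂ ∧
    beta2S y Y X₁ X₂ - betaOLS y Y X₁ = C1 Y X₁ X₂ *ᵥ y ∧
    beta2S y Y X₁ X₂ - betaOLS y Y X₁ = C1 Y X₁ X₂ *ᵥ (M1 X₁ *ᵥ y) ∧
    (beta2S y Y X₁ X₂ - betaOLS y Y X₁) ⬝ᵥ
        ((Dhat Y X₁ X₂)⁻¹ *ᵥ (beta2S y Y X₁ X₂ - betaOLS y Y X₁))
      = y ⬝ᵥ (Psi0 Y X₁ X₂ *ᵥ y) ∧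
    (beta2S y Y X₁ X₂ - betaOLS y Y X₁) ⬝ᵥ
        ((Dhat Y X₁ X₂)⁻¹ *ᵥ (beta2S y Y X₁ X₂ - betaOLS y Y X₁))
      = (M1 X₁ *ᵥ y) ⬝ᵥ (Psi0 Y X₁ X₂ *ᵥ (M1 X₁ *ᵥ y)) := by
  obtain ⟨hr1, hr2, hr3, hr4⟩ := hrank
  -- basic invertibility facts
  have hX1u : IsUnit (X₁ᵀ * X₁) := isUnit_tmul_of_rank (by simp [hr1])
  have hXu : IsUnit ((fromCols X₁ X₂)ᵀ * fromCols X₁ X₂) :=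
    isUnit_tmul_of_rank (by simp [hr2])
  -- projection facts
  have hM1t : (M1 X₁)ᵀ = M1 X₁ := annM_transpose
  have hM1i : M1 X₁ * M1 X₁ = M1 X₁ := annM_idem hX1u
  have hM1X1 : M1 X₁ * X₁ = 0 := annM_mul_self hX1u
  have hPt : (Pm X₁ X₂)ᵀ = Pm X₁ X₂ := projM_transpose
  have hPi : Pm X₁ X₂ * Pm X₁ X₂ = Pm X₁ X₂ := projM_idem hXu
  have hPX : Pm X₁ X₂ * fromCols X₁ X₂ = fromCols X₁ X₂ := projM_mul_self hXu
  have hPX1 : Pm X₁ X₂ * X₁ = X₁ := by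
    have e1 : fromCols X₁ X₂ * fromRows (1 : Matrix (Fin k₁) (Fin k₁) ℝ)
        (0 : Matrix (Fin k₂) (Fin k₁) ℝ) = X₁ := by
      rw [fromCols_mul_fromRows, Matrix.mul_one, Matrix.mul_zero, add_zero]
    calc Pm X₁ X₂ * X₁
        = Pm X₁ X₂ * fromCols X₁ X₂ * fromRows (1 : Matrix (Fin k₁) (Fin k₁) ℝ)
            (0 : Matrix (Fin k₂) (Fin k₁) ℝ) := by rw [Matrix.mul_assoc, e1]
      _ = X₁ := by rw [hPX, e1]
  have hPP1 : Pm X₁ X₂ * projM X₁ = projM X₁ := by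
    show Pm X₁ X₂ * (X₁ * (X₁ᵀ * X₁)⁻¹ * X₁ᵀ) = X₁ * (X₁ᵀ * X₁)⁻¹ * X₁ᵀ
    rw [← Matrix.mul_assoc, ← Matrix.mul_assoc, hPX1]
  have hP1P : projM X₁ * Pm X₁ X₂ = projM X₁ := by
    have h := congrArg Matrix.transpose hPP1
    rwa [transpose_mul, hPt, projM_transpose] at h
  have hN1eq : N1 X₁ X₂ = Pm X₁ X₂ - projM X₁ := by
    rw [N1, M1, annM, Matrix.sub_mul, Matrix.one_mul, hP1P]
  have hN1t : (N1 X₁ X₂)ᵀ = N1 X₁ X₂ := by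
    rw [hN1eq, transpose_sub, hPt, projM_transpose]
  have hN1i : N1 X₁ X₂ * N1 X₁ X₂ = N1 X₁ X₂ := by
    rw [hN1eq]
    simp only [Matrix.sub_mul, Matrix.mul_sub, hPi, hPP1, hP1P, projM_idem hX1u]
    abel
  have hN1M1 : N1 X₁ X₂ * M1 X₁ = N1 X₁ X₂ := by
    rw [hN1eq, M1, annM]
    simp only [Matrix.mul_sub, Matrix.sub_mul, Matrix.mul_one, hPP1, hP1P,
      projM_idem hX1u]
    abel
  have hN1X1 : N1 X₁ X₂ * X₁ = 0 := by
    rw [N1, Matrix.mul_assoc, hPX1, hM1X1]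
  -- injectivity of column blocks
  have hZinj : Function.Injective (fromCols Y (fromCols X₁ X₂)).mulVec :=
    inj_of_rank (by simp [hr3])
  have hYX1inj : Function.Injective (fromCols Y X₁).mulVec := by
    apply inj_of_ker
    intro u hu
    have hu0 : Y *ᵥ (u ∘ Sum.inl) + X₁ *ᵥ (u ∘ Sum.inr) = 0 := by
      have hue : u = Sum.elim (u ∘ Sum.inl) (u ∘ Sum.inr) := by
        funext i; cases i <;> rfl
      rw [hue, fromCols_mulVec_sumElim] at hu
      exact hu
    have hz : fromCols Y (fromCols X₁ X₂) *ᵥ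
        Sum.elim (u ∘ Sum.inl) (Sum.elim (u ∘ Sum.inr) 0) = 0 := by
      rw [fromCols_mulVec_sumElim, fromCols_mulVec_sumElim, mulVec_zero,
        add_zero, hu0]
    have h0 := ker_of_inj hZinj _ hz
    funext i
    cases i with
    | inl i => exact congrFun h0 (Sum.inl i)
    | inr j => exact congrFun h0 (Sum.inr (Sum.inl j))
  have hPYinj : Function.Injective (fromCols (Pm X₁ X₂ * Y) X₁).mulVec :=
    inj_of_rank (by simp [hr4])
  have hOmu : IsUnit (Yᵀ * M1 X₁ * Y) := isUnit_quad Y X₁ hX1u hYX1inj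
  have hPM1 : Pm X₁ X₂ * M1 X₁ = Pm X₁ X₂ - projM X₁ := by
    rw [M1, annM, Matrix.mul_sub, Matrix.mul_one, hPP1]
  have hPM1P : Pm X₁ X₂ * M1 X₁ * Pm X₁ X₂ = N1 X₁ X₂ := by
    rw [hPM1, Matrix.sub_mul, hPi, hP1P, hN1eq]
  have hIVu : IsUnit (Yᵀ * N1 X₁ X₂ * Y) := by
    have hq := isUnit_quad (Pm X₁ X₂ * Y) X₁ hX1u hPYinj
    have heq : (Pm X₁ X₂ * Y)ᵀ * annM X₁ * (Pm X₁ X₂ * Y) = Yᵀ * N1 X₁ X₂ * Y := by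
      conv_rhs => rw [← hPM1P]
      rw [transpose_mul, hPt, M1]
      simp only [Matrix.mul_assoc]
    rwa [heq] at hq
  have hdet1 := (isUnit_iff_isUnit_det _).mp hOmu
  have hdet2 := (isUnit_iff_isUnit_det _).mp hIVu
  -- the individual statements
  have h1 : B1 Y X₁ * M1 X₁ = B1 Y X₁ := by
    simp only [B1, Matrix.mul_assoc, hM1i]
  have h2 : B2 Y X₁ X₂ * M1 X₁ = B2 Y X₁ X₂ := by
    simp only [B2, Matrix.mul_assoc, hN1M1]
  have h3 : B2 Y X₁ X₂ * N1 X₁ X₂ = B2 Y X₁ X₂ := by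
    simp only [B2, Matrix.mul_assoc, hN1i]
  have h4 : B1 Y X₁ * Y = 1 := by
    rw [B1, Matrix.mul_assoc, Matrix.nonsing_inv_mul _ hdet1]
  have h5 : B2 Y X₁ X₂ * Y = 1 := by
    rw [B2, Matrix.mul_assoc, Matrix.nonsing_inv_mul _ hdet2]
  have h6 : C1 Y X₁ X₂ * Y = 0 := by
    rw [C1, Matrix.sub_mul, h5, h4, sub_self]
  have hB1X1 : B1 Y X₁ * X₁ = 0 := by
    simp only [B1, Matrix.mul_assoc, hM1X1, Matrix.mul_zero]
  have hB2X1 : B2 Y X₁ X₂ * X₁ = 0 := by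
    simp only [B2, Matrix.mul_assoc, hN1X1, Matrix.mul_zero]
  have h7 : C1 Y X₁ X₂ * X₁ = 0 := by
    rw [C1, Matrix.sub_mul, hB2X1, hB1X1, sub_self]
  have h9 : C1 Y X₁ X₂ * M1 X₁ = C1 Y X₁ X₂ := by
    rw [C1, Matrix.sub_mul, h2, h1]
  have hC1M1Y : C1 Y X₁ X₂ * (M1 X₁ * Y) = 0 := by
    rw [← Matrix.mul_assoc, h9, h6]
  have h8 : C1 Y X₁ X₂ * projM (M1 X₁ * Y) = 0 := by
    rw [projM, ← Matrix.mul_assoc, ← Matrix.mul_assoc, hC1M1Y, Matrix.zero_mul,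
      Matrix.zero_mul]
  have h10 : C1 Y X₁ X₂ * annM (M1 X₁ * Y) = C1 Y X₁ X₂ := by
    rw [annM, Matrix.mul_sub, Matrix.mul_one, h8, sub_zero]
  have hM1C1t : M1 X₁ * (C1 Y X₁ X₂)ᵀ = (C1 Y X₁ X₂)ᵀ := by
    conv_rhs => rw [← h9]
    rw [transpose_mul, hM1t]
  have h12 : M1 X₁ * Psi0 Y X₁ X₂ = Psi0 Y X₁ X₂ := by
    rw [Psi0, ← Matrix.mul_assoc, ← Matrix.mul_assoc, hM1C1t]
  have h13 : Psi0 Y X₁ X₂ * M1 X₁ = Psi0 Y X₁ X₂ := by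
    have e : Psi0 Y X₁ X₂ * M1 X₁
        = (C1 Y X₁ X₂)ᵀ * (Dhat Y X₁ X₂)⁻¹ * (C1 Y X₁ X₂ * M1 X₁) := by
      rw [Psi0, Matrix.mul_assoc]
    rw [e, h9]
    rfl
  have h11 : M1 X₁ * Psi0 Y X₁ X₂ * M1 X₁ = Psi0 Y X₁ X₂ := by
    rw [h12, h13]
  have h14 : beta2S y Y X₁ X₂ - betaOLS y Y X₁ = C1 Y X₁ X₂ *ᵥ y := by
    rw [beta2S, betaOLS, C1, sub_mulVec]
  have h15 : beta2S y Y X₁ X₂ - betaOLS y Y X₁ = C1 Y X₁ X₂ *ᵥ (M1 X₁ *ᵥ y) := by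
    rw [mulVec_mulVec, h9]
    exact h14
  have quad : ∀ u : Fin T → ℝ,
      (C1 Y X₁ X₂ *ᵥ u) ⬝ᵥ ((Dhat Y X₁ X₂)⁻¹ *ᵥ (C1 Y X₁ X₂ *ᵥ u))
        = u ⬝ᵥ (Psi0 Y X₁ X₂ *ᵥ u) := by
    intro u
    rw [Psi0, ← mulVec_mulVec, ← mulVec_mulVec, dotProduct_mulVec u, vecMul_transpose]
  have h16 : (beta2S y Y X₁ X₂ - betaOLS y Y X₁) ⬝ᵥ
      ((Dhat Y X₁ X₂)⁻¹ *ᵥ (beta2S y Y X₁ X₂ - betaOLS y Y X₁))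
        = y ⬝ᵥ (Psi0 Y X₁ X₂ *ᵥ y) := by
    rw [h14]; exact quad y
  have h17 : (beta2S y Y X₁ X₂ - betaOLS y Y X₁) ⬝ᵥ
      ((Dhat Y X₁ X₂)⁻¹ *ᵥ (beta2S y Y X₁ X₂ - betaOLS y Y X₁))
        = (M1 X₁ *ᵥ y) ⬝ᵥ (Psi0 Y X₁ X₂ *ᵥ (M1 X₁ *ᵥ y)) := by
    rw [h15]; exact quad (M1 X₁ *ᵥ y)
  exact ⟨h1, h2, h3, h4, h5, h6, h7, h8, h9, h10, h11, h12, h13, h14, h15, h16, h17⟩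
end

section
/- Under the rank condition: B₁B₁ᵀ = B₁B₂ᵀ = B₂B₁ᵀ = (1/T)·Ω̂_LS⁻¹, B₂B₂ᵀ = (1/T)·Ω̂_IV⁻¹, C₁C₁ᵀ = (1/T)·(Ω̂_IV⁻¹ − Ω̂_LS⁻¹) = (1/T)·Δ̂, C₁Ψ₀ = (1/T)·C₁, and Ψ₀Ψ₀ = (1/T)·Ψ₀. -/
open Matrix

variable {T G k₁ k₂ : ℕ}

section AuxLemmas

open Matrix

lemma auxRankInj {m n : Type*} [Fintype m] [Fintype n] [DecidableEq n]
    (A : Matrix m n ℝ) :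
    A.rank = Fintype.card n ↔ Function.Injective A.mulVec := by
  have hrn := LinearMap.finrank_range_add_finrank_ker A.mulVecLin
  rw [Module.finrank_pi] at hrn
  have hr : A.rank = Module.finrank ℝ (LinearMap.range A.mulVecLin) := rfl
  have hmv : A.mulVec = A.mulVecLin := by
    funext v; simp [Matrix.mulVecLin_apply]
  rw [hmv]
  constructor
  · intro h
    have hker : Module.finrank ℝ (LinearMap.ker A.mulVecLin) = 0 := by omega
    rw [← LinearMap.ker_eq_bot]
    exact Submodule.finrank_eq_zero.mp hker
  · intro h
    have hk : LinearMap.ker A.mulVecLin = ⊥ := LinearMap.ker_eq_bot.mpr h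
    rw [hr]
    rw [hk, finrank_bot] at hrn
    omega

lemma auxIsUnitOfRank {n : Type*} [Fintype n] [DecidableEq n] (B : Matrix n n ℝ)
    (h : B.rank = Fintype.card n) : IsUnit B :=
  mulVec_injective_iff_isUnit.mp ((auxRankInj B).mp h)

lemma auxIsUnitTMS {m n : Type*} [Fintype m] [Fintype n] [DecidableEq n]
    (A : Matrix m n ℝ) (h : Function.Injective A.mulVec) : IsUnit (Aᵀ * A) :=
  auxIsUnitOfRank _ (by rw [Matrix.rank_transpose_mul_self]; exact (auxRankInj A).mpr h)

lemma auxInjOfKer {m n : Type*} [Fintype n] (A : Matrix m n ℝ)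
    (h : ∀ v, A *ᵥ v = 0 → v = 0) : Function.Injective A.mulVec := by
  intro x y hxy
  exact sub_eq_zero.mp (h (x - y) (by rw [Matrix.mulVec_sub, hxy, sub_self]))

lemma auxProjT {T : ℕ} {n : Type*} [Fintype n] [DecidableEq n]
    (A : Matrix (Fin T) n ℝ) : (projM A)ᵀ = projM A := by
  have h : ((Aᵀ * A)⁻¹)ᵀ = (Aᵀ * A)⁻¹ := by
    rw [Matrix.transpose_nonsing_inv, Matrix.transpose_mul, Matrix.transpose_transpose]
  simp only [projM, Matrix.transpose_mul, Matrix.transpose_transpose, h, Matrix.mul_assoc]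

lemma auxProjMul {T : ℕ} {n : Type*} [Fintype n] [DecidableEq n]
    (A : Matrix (Fin T) n ℝ) (h : IsUnit (Aᵀ * A)) : projM A * A = A := by
  have hd := (Matrix.isUnit_iff_isUnit_det _).mp h
  rw [projM, Matrix.mul_assoc, Matrix.mul_assoc, Matrix.nonsing_inv_mul _ hd, Matrix.mul_one]

lemma auxProjIdem {T : ℕ} {n : Type*} [Fintype n] [DecidableEq n]
    (A : Matrix (Fin T) n ℝ) (h : IsUnit (Aᵀ * A)) : projM A * projM A = projM A := by
  calc projM A * projM A = (projM A * A) * ((Aᵀ * A)⁻¹ * Aᵀ) := by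
        simp only [projM, Matrix.mul_assoc]
    _ = projM A := by rw [auxProjMul A h, projM, Matrix.mul_assoc]

lemma auxSmulInv {n : Type*} [Fintype n] [DecidableEq n] (c : ℝ) (hc : c ≠ 0)
    (A : Matrix n n ℝ) (hA : IsUnit A) : (c • A)⁻¹ = c⁻¹ • A⁻¹ := by
  haveI := invertibleOfNonzero hc
  rw [Matrix.inv_smul (A := A) c ((Matrix.isUnit_iff_isUnit_det _).mp hA), invOf_eq_inv c]

lemma auxIsUnitSmul {n : Type*} [Fintype n] [DecidableEq n] (c : ℝ) (hc : c ≠ 0)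
    (A : Matrix n n ℝ) (hA : IsUnit A) : IsUnit (c • A) := by
  have h1 : c • A = (c • (1 : Matrix n n ℝ)) * A := by
    rw [Matrix.smul_mul, Matrix.one_mul]
  rw [h1]
  refine IsUnit.mul ?_ hA
  rw [Matrix.isUnit_iff_isUnit_det, Matrix.det_smul, Matrix.det_one, mul_one]
  exact isUnit_iff_ne_zero.mpr (pow_ne_zero _ hc)

lemma auxGram {T G : ℕ} (Y : Matrix (Fin T) (Fin G) ℝ) (Q : Matrix (Fin T) (Fin T) ℝ)
    (hs : Qᵀ = Q) (hi : Q * Q = Q) : (Q * Y)ᵀ * (Q * Y) = Yᵀ * Q * Y := by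
  rw [Matrix.transpose_mul, hs, ← Matrix.mul_assoc, Matrix.mul_assoc Yᵀ, hi]

lemma auxBB1 {T G : ℕ} (Y : Matrix (Fin T) (Fin G) ℝ) (Q R : Matrix (Fin T) (Fin T) ℝ)
    (hRT : Rᵀ = R) (hQR : Q * R = R)
    (hUQ : IsUnit (Yᵀ * Q * Y)) (hUR : IsUnit (Yᵀ * R * Y)) :
    ((Yᵀ * Q * Y)⁻¹ * (Yᵀ * Q)) * ((Yᵀ * R * Y)⁻¹ * (Yᵀ * R))ᵀ = (Yᵀ * Q * Y)⁻¹ := by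
  have hRdet := (Matrix.isUnit_iff_isUnit_det _).mp hUR
  have hRs : (Yᵀ * R * Y)ᵀ = Yᵀ * R * Y := by
    rw [Matrix.transpose_mul, Matrix.transpose_mul, Matrix.transpose_transpose, hRT,
      Matrix.mul_assoc]
  have hinvT : ((Yᵀ * R * Y)⁻¹)ᵀ = (Yᵀ * R * Y)⁻¹ := by
    rw [Matrix.transpose_nonsing_inv, hRs]
  have key : Yᵀ * Q * (R * Y) = Yᵀ * R * Y := by
    rw [Matrix.mul_assoc Yᵀ, ← Matrix.mul_assoc Q, hQR, Matrix.mul_assoc]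
  calc ((Yᵀ * Q * Y)⁻¹ * (Yᵀ * Q)) * ((Yᵀ * R * Y)⁻¹ * (Yᵀ * R))ᵀ
      = (Yᵀ * Q * Y)⁻¹ * ((Yᵀ * Q * (R * Y)) * (Yᵀ * R * Y)⁻¹) := by
        rw [Matrix.transpose_mul, hinvT, Matrix.transpose_mul, Matrix.transpose_transpose, hRT]
        simp only [Matrix.mul_assoc]
    _ = (Yᵀ * Q * Y)⁻¹ * ((Yᵀ * R * Y) * (Yᵀ * R * Y)⁻¹) := by rw [key]
    _ = (Yᵀ * Q * Y)⁻¹ := by rw [Matrix.mul_nonsing_inv _ hRdet, Matrix.mul_one]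

lemma auxBB2 {T G : ℕ} (Y : Matrix (Fin T) (Fin G) ℝ) (Q R : Matrix (Fin T) (Fin T) ℝ)
    (hRT : Rᵀ = R) (hQR : Q * R = Q)
    (hUQ : IsUnit (Yᵀ * Q * Y)) (hUR : IsUnit (Yᵀ * R * Y)) :
    ((Yᵀ * Q * Y)⁻¹ * (Yᵀ * Q)) * ((Yᵀ * R * Y)⁻¹ * (Yᵀ * R))ᵀ = (Yᵀ * R * Y)⁻¹ := by
  have hQdet := (Matrix.isUnit_iff_isUnit_det _).mp hUQ
  have hRdet := (Matrix.isUnit_iff_isUnit_det _).mp hUR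
  have hRs : (Yᵀ * R * Y)ᵀ = Yᵀ * R * Y := by
    rw [Matrix.transpose_mul, Matrix.transpose_mul, Matrix.transpose_transpose, hRT,
      Matrix.mul_assoc]
  have hinvT : ((Yᵀ * R * Y)⁻¹)ᵀ = (Yᵀ * R * Y)⁻¹ := by
    rw [Matrix.transpose_nonsing_inv, hRs]
  have key : Yᵀ * Q * (R * Y) = Yᵀ * Q * Y := by
    rw [Matrix.mul_assoc Yᵀ, ← Matrix.mul_assoc Q, hQR, Matrix.mul_assoc]
  calc ((Yᵀ * Q * Y)⁻¹ * (Yᵀ * Q)) * ((Yᵀ * R * Y)⁻¹ * (Yᵀ * R))ᵀ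
      = (Yᵀ * Q * Y)⁻¹ * ((Yᵀ * Q * (R * Y)) * (Yᵀ * R * Y)⁻¹) := by
        rw [Matrix.transpose_mul, hinvT, Matrix.transpose_mul, Matrix.transpose_transpose, hRT]
        simp only [Matrix.mul_assoc]
    _ = (Yᵀ * Q * Y)⁻¹ * ((Yᵀ * Q * Y) * (Yᵀ * R * Y)⁻¹) := by rw [key]
    _ = (Yᵀ * R * Y)⁻¹ := by
        rw [← Matrix.mul_assoc, Matrix.nonsing_inv_mul _ hQdet, Matrix.one_mul]

end AuxLemmas

/-- Under the rank condition: `B₁B₁ᵀ = B₁B₂ᵀ = B₂B₁ᵀ = (1/T)Ω̂_LS⁻¹`,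
`B₂B₂ᵀ = (1/T)Ω̂_IV⁻¹`, `C₁C₁ᵀ = (1/T)(Ω̂_IV⁻¹ − Ω̂_LS⁻¹) = (1/T)Δ̂`,
`C₁Ψ₀ = (1/T)C₁`, and `Ψ₀Ψ₀ = (1/T)Ψ₀`. -/
theorem stmt6 {T G k₁ k₂ : ℕ}
    (hT : 0 < T) (hG : 0 < G) (hk₁ : 0 < k₁) (hk₂ : 0 < k₂)
    (Y : Matrix (Fin T) (Fin G) ℝ)
    (X₁ : Matrix (Fin T) (Fin k₁) ℝ) (X₂ : Matrix (Fin T) (Fin k₂) ℝ)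
    (hrank : RankCond Y X₁ X₂) :
    B1 Y X₁ * (B1 Y X₁)ᵀ = (T : ℝ)⁻¹ • (OmLS Y X₁)⁻¹ ∧
    B1 Y X₁ * (B2 Y X₁ X₂)ᵀ = (T : ℝ)⁻¹ • (OmLS Y X₁)⁻¹ ∧
    B2 Y X₁ X₂ * (B1 Y X₁)ᵀ = (T : ℝ)⁻¹ • (OmLS Y X₁)⁻¹ ∧
    B2 Y X₁ X₂ * (B2 Y X₁ X₂)ᵀ = (T : ℝ)⁻¹ • (OmIV Y X₁ X₂)⁻¹ ∧
    C1 Y X₁ X₂ * (C1 Y X₁ X₂)ᵀ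
      = (T : ℝ)⁻¹ • ((OmIV Y X₁ X₂)⁻¹ - (OmLS Y X₁)⁻¹) ∧
    C1 Y X₁ X₂ * (C1 Y X₁ X₂)ᵀ = (T : ℝ)⁻¹ • Dhat Y X₁ X₂ ∧
    C1 Y X₁ X₂ * Psi0 Y X₁ X₂ = (T : ℝ)⁻¹ • C1 Y X₁ X₂ ∧
    Psi0 Y X₁ X₂ * Psi0 Y X₁ X₂ = (T : ℝ)⁻¹ • Psi0 Y X₁ X₂ := by
  obtain ⟨h1, h2, h3, h4⟩ := hrank
  have ht : (T : ℝ) ≠ 0 := Nat.cast_ne_zero.mpr hT.ne'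
  -- injectivity of the basic design matrices
  have hX₁inj : Function.Injective X₁.mulVec :=
    (auxRankInj X₁).mp (by simpa using h1)
  have hXinj : Function.Injective (fromCols X₁ X₂).mulVec :=
    (auxRankInj _).mp (by simpa using h2)
  have hZinj : Function.Injective (Zfull Y X₁ X₂).mulVec :=
    (auxRankInj _).mp (by simpa [Zfull] using h3)
  have hPYinj : Function.Injective (fromCols (Pm X₁ X₂ * Y) X₁).mulVec :=
    (auxRankInj _).mp (by simpa using h4)
  have hU₁ : IsUnit (X₁ᵀ * X₁) := auxIsUnitTMS X₁ hX₁inj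
  have hU : IsUnit ((fromCols X₁ X₂)ᵀ * fromCols X₁ X₂) := auxIsUnitTMS _ hXinj
  -- projection identities
  have hP1T : (projM X₁)ᵀ = projM X₁ := auxProjT X₁
  have hPfT : (projM (fromCols X₁ X₂))ᵀ = projM (fromCols X₁ X₂) :=
    auxProjT _
  have hP1idem : projM X₁ * projM X₁ = projM X₁ := auxProjIdem X₁ hU₁
  have hPfidem : projM (fromCols X₁ X₂) * projM (fromCols X₁ X₂)
      = projM (fromCols X₁ X₂) := auxProjIdem _ hU
  have hPfX : projM (fromCols X₁ X₂) * fromCols X₁ X₂ = fromCols X₁ X₂ :=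
    auxProjMul _ hU
  have hPfX₁ : projM (fromCols X₁ X₂) * X₁ = X₁ := by
    have hE : fromCols X₁ X₂ *
        fromRows (1 : Matrix (Fin k₁) (Fin k₁) ℝ) (0 : Matrix (Fin k₂) (Fin k₁) ℝ) = X₁ := by
      rw [fromCols_mul_fromRows, Matrix.mul_one, Matrix.mul_zero, add_zero]
    calc projM (fromCols X₁ X₂) * X₁
        = projM (fromCols X₁ X₂) * (fromCols X₁ X₂ *
            fromRows (1 : Matrix (Fin k₁) (Fin k₁) ℝ) (0 : Matrix (Fin k₂) (Fin k₁) ℝ)) := by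
          rw [hE]
      _ = (projM (fromCols X₁ X₂) * fromCols X₁ X₂) *
            fromRows (1 : Matrix (Fin k₁) (Fin k₁) ℝ) (0 : Matrix (Fin k₂) (Fin k₁) ℝ) := by
          rw [Matrix.mul_assoc]
      _ = X₁ := by rw [hPfX, hE]
  have hPfP1 : projM (fromCols X₁ X₂) * projM X₁ = projM X₁ := by
    calc projM (fromCols X₁ X₂) * projM X₁
        = (projM (fromCols X₁ X₂) * X₁) * ((X₁ᵀ * X₁)⁻¹ * X₁ᵀ) := by
          simp only [projM, Matrix.mul_assoc]
      _ = projM X₁ := by rw [hPfX₁, projM, Matrix.mul_assoc]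
  have hP1Pf : projM X₁ * projM (fromCols X₁ X₂) = projM X₁ := by
    have h := congrArg Matrix.transpose hPfP1
    rwa [Matrix.transpose_mul, hP1T, hPfT] at h
  -- identities for M1, N1, Mm
  have hM1d : M1 X₁ = 1 - projM X₁ := rfl
  have hN1 : N1 X₁ X₂ = projM (fromCols X₁ X₂) - projM X₁ := by
    rw [N1, hM1d, Pm, Matrix.sub_mul, Matrix.one_mul, hP1Pf]
  have hMmd : Mm X₁ X₂ = 1 - projM (fromCols X₁ X₂) := rfl
  have hM1T : (M1 X₁)ᵀ = M1 X₁ := by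
    rw [hM1d, Matrix.transpose_sub, Matrix.transpose_one, hP1T]
  have hN1T : (N1 X₁ X₂)ᵀ = N1 X₁ X₂ := by
    rw [hN1, Matrix.transpose_sub, hPfT, hP1T]
  have hMmT : (Mm X₁ X₂)ᵀ = Mm X₁ X₂ := by
    rw [hMmd, Matrix.transpose_sub, Matrix.transpose_one, hPfT]
  have hM1idem : M1 X₁ * M1 X₁ = M1 X₁ := by
    rw [hM1d]
    simp only [Matrix.sub_mul, Matrix.mul_sub, Matrix.one_mul, Matrix.mul_one, hP1idem]
    abel
  have hMmidem : Mm X₁ X₂ * Mm X₁ X₂ = Mm X₁ X₂ := by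
    rw [hMmd]
    simp only [Matrix.sub_mul, Matrix.mul_sub, Matrix.one_mul, Matrix.mul_one, hPfidem]
    abel
  have hN1idem : N1 X₁ X₂ * N1 X₁ X₂ = N1 X₁ X₂ := by
    rw [hN1]
    simp only [Matrix.sub_mul, Matrix.mul_sub, hPfidem, hP1idem, hPfP1, hP1Pf]
    abel
  have hM1N1 : M1 X₁ * N1 X₁ X₂ = N1 X₁ X₂ := by
    rw [hM1d, hN1]
    simp only [Matrix.sub_mul, Matrix.mul_sub, Matrix.one_mul, hP1Pf, hP1idem]
    abel
  have hN1M1 : N1 X₁ X₂ * M1 X₁ = N1 X₁ X₂ := by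
    have h := congrArg Matrix.transpose hM1N1
    rwa [Matrix.transpose_mul, hM1T, hN1T] at h
  have hMmsub : Mm X₁ X₂ = M1 X₁ - N1 X₁ X₂ := by
    rw [hMmd, hM1d, hN1]; abel
  -- point images of the projections
  have hP1v : ∀ z : Fin T → ℝ, projM X₁ *ᵥ z = X₁ *ᵥ (((X₁ᵀ * X₁)⁻¹ * X₁ᵀ) *ᵥ z) := by
    intro z
    rw [Matrix.mulVec_mulVec, projM, Matrix.mul_assoc]
  have hPfv : ∀ z : Fin T → ℝ, projM (fromCols X₁ X₂) *ᵥ z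
      = fromCols X₁ X₂ *ᵥ
        ((((fromCols X₁ X₂)ᵀ * fromCols X₁ X₂)⁻¹ * (fromCols X₁ X₂)ᵀ) *ᵥ z) := by
    intro z
    rw [Matrix.mulVec_mulVec, projM, Matrix.mul_assoc]
  -- injectivity of M₁Y, MY, N₁Y
  have hM1Yinj : Function.Injective (M1 X₁ * Y).mulVec := by
    apply auxInjOfKer
    intro v hv
    rw [← Matrix.mulVec_mulVec, hM1d, Matrix.sub_mulVec, Matrix.one_mulVec, sub_eq_zero] at hv
    have hYv : Y *ᵥ v = X₁ *ᵥ (((X₁ᵀ * X₁)⁻¹ * X₁ᵀ) *ᵥ (Y *ᵥ v)) := hv.trans (hP1v _)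
    set w := ((X₁ᵀ * X₁)⁻¹ * X₁ᵀ) *ᵥ (Y *ᵥ v) with hw
    have hz : Zfull Y X₁ X₂ *ᵥ (Sum.elim v (Sum.elim (-w) 0)) = Zfull Y X₁ X₂ *ᵥ 0 := by
      rw [Matrix.mulVec_zero, Zfull, fromCols_mulVec_sumElim, fromCols_mulVec_sumElim,
        Matrix.mulVec_zero, add_zero, Matrix.mulVec_neg, hYv]
      exact add_neg_cancel _
    have h0 := hZinj hz
    funext i
    exact congrFun h0 (Sum.inl i)
  have hMYinj : Function.Injective (Mm X₁ X₂ * Y).mulVec := by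
    apply auxInjOfKer
    intro v hv
    rw [← Matrix.mulVec_mulVec, hMmd, Matrix.sub_mulVec, Matrix.one_mulVec, sub_eq_zero] at hv
    have hYv : Y *ᵥ v = fromCols X₁ X₂ *ᵥ
        ((((fromCols X₁ X₂)ᵀ * fromCols X₁ X₂)⁻¹ * (fromCols X₁ X₂)ᵀ) *ᵥ (Y *ᵥ v)) :=
      hv.trans (hPfv _)
    set w := (((fromCols X₁ X₂)ᵀ * fromCols X₁ X₂)⁻¹ * (fromCols X₁ X₂)ᵀ) *ᵥ (Y *ᵥ v)
      with hw
    have hz : Zfull Y X₁ X₂ *ᵥ (Sum.elim v (-w)) = Zfull Y X₁ X₂ *ᵥ 0 := by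
      rw [Matrix.mulVec_zero, Zfull, fromCols_mulVec_sumElim, Matrix.mulVec_neg, hYv]
      exact add_neg_cancel _
    have h0 := hZinj hz
    funext i
    exact congrFun h0 (Sum.inl i)
  have hN1Yinj : Function.Injective (N1 X₁ X₂ * Y).mulVec := by
    apply auxInjOfKer
    intro v hv
    have hv' : M1 X₁ *ᵥ (Pm X₁ X₂ *ᵥ (Y *ᵥ v)) = 0 := by
      rw [Matrix.mulVec_mulVec, Matrix.mulVec_mulVec]
      exact hv
    rw [hM1d, Matrix.sub_mulVec, Matrix.one_mulVec, sub_eq_zero] at hv'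
    have hYv : Pm X₁ X₂ *ᵥ (Y *ᵥ v)
        = X₁ *ᵥ (((X₁ᵀ * X₁)⁻¹ * X₁ᵀ) *ᵥ (Pm X₁ X₂ *ᵥ (Y *ᵥ v))) := hv'.trans (hP1v _)
    set w := ((X₁ᵀ * X₁)⁻¹ * X₁ᵀ) *ᵥ (Pm X₁ X₂ *ᵥ (Y *ᵥ v)) with hw
    have hz : fromCols (Pm X₁ X₂ * Y) X₁ *ᵥ (Sum.elim v (-w))
        = fromCols (Pm X₁ X₂ * Y) X₁ *ᵥ 0 := by
      rw [Matrix.mulVec_zero, fromCols_mulVec_sumElim, Matrix.mulVec_neg,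
        ← Matrix.mulVec_mulVec, hYv]
      exact add_neg_cancel _
    have h0 := hPYinj hz
    funext i
    exact congrFun h0 (Sum.inl i)
  -- invertibility of the Gram matrices
  have hUA : IsUnit (Yᵀ * M1 X₁ * Y) := by
    rw [← auxGram Y _ hM1T hM1idem]; exact auxIsUnitTMS _ hM1Yinj
  have hUB : IsUnit (Yᵀ * N1 X₁ X₂ * Y) := by
    rw [← auxGram Y _ hN1T hN1idem]; exact auxIsUnitTMS _ hN1Yinj
  have hUC : IsUnit (Yᵀ * Mm X₁ X₂ * Y) := by
    rw [← auxGram Y _ hMmT hMmidem]; exact auxIsUnitTMS _ hMYinj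
  have hAdet := (Matrix.isUnit_iff_isUnit_det _).mp hUA
  have hBdet := (Matrix.isUnit_iff_isUnit_det _).mp hUB
  -- the four basic products
  have e11 : B1 Y X₁ * (B1 Y X₁)ᵀ = (Yᵀ * M1 X₁ * Y)⁻¹ :=
    auxBB1 Y (M1 X₁) (M1 X₁) hM1T hM1idem hUA hUA
  have e12 : B1 Y X₁ * (B2 Y X₁ X₂)ᵀ = (Yᵀ * M1 X₁ * Y)⁻¹ :=
    auxBB1 Y (M1 X₁) (N1 X₁ X₂) hN1T hM1N1 hUA hUB
  have e21 : B2 Y X₁ X₂ * (B1 Y X₁)ᵀ = (Yᵀ * M1 X₁ * Y)⁻¹ :=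
    auxBB2 Y (N1 X₁ X₂) (M1 X₁) hM1T hN1M1 hUB hUA
  have e22 : B2 Y X₁ X₂ * (B2 Y X₁ X₂)ᵀ = (Yᵀ * N1 X₁ X₂ * Y)⁻¹ :=
    auxBB1 Y (N1 X₁ X₂) (N1 X₁ X₂) hN1T hN1idem hUB hUB
  -- scalar bookkeeping
  have hOmLSinv : (OmLS Y X₁)⁻¹ = (T : ℝ) • (Yᵀ * M1 X₁ * Y)⁻¹ := by
    rw [OmLS, auxSmulInv _ (inv_ne_zero ht) _ hUA, inv_inv]
  have hOmIVinv : (OmIV Y X₁ X₂)⁻¹ = (T : ℝ) • (Yᵀ * N1 X₁ X₂ * Y)⁻¹ := by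
    rw [OmIV, auxSmulInv _ (inv_ne_zero ht) _ hUB, inv_inv]
  have hLS : (T : ℝ)⁻¹ • (OmLS Y X₁)⁻¹ = (Yᵀ * M1 X₁ * Y)⁻¹ := by
    rw [hOmLSinv, smul_smul, inv_mul_cancel₀ ht, one_smul]
  have hIV : (T : ℝ)⁻¹ • (OmIV Y X₁ X₂)⁻¹ = (Yᵀ * N1 X₁ X₂ * Y)⁻¹ := by
    rw [hOmIVinv, smul_smul, inv_mul_cancel₀ ht, one_smul]
  -- C₁C₁ᵀ
  have eC : C1 Y X₁ X₂ * (C1 Y X₁ X₂)ᵀ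
      = (Yᵀ * N1 X₁ X₂ * Y)⁻¹ - (Yᵀ * M1 X₁ * Y)⁻¹ := by
    rw [C1, Matrix.transpose_sub, Matrix.mul_sub, Matrix.sub_mul, Matrix.sub_mul,
      e11, e12, e21, e22]
    abel
  -- Δ̂ and its invertibility
  have hDhat : Dhat Y X₁ X₂
      = (T : ℝ) • ((Yᵀ * N1 X₁ X₂ * Y)⁻¹ - (Yᵀ * M1 X₁ * Y)⁻¹) := by
    rw [Dhat, hOmIVinv, hOmLSinv, smul_sub]
  have hdiff : Yᵀ * Mm X₁ X₂ * Y = Yᵀ * M1 X₁ * Y - Yᵀ * N1 X₁ X₂ * Y := by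
    rw [hMmsub, Matrix.mul_sub, Matrix.sub_mul]
  have hfac : (Yᵀ * N1 X₁ X₂ * Y)⁻¹ - (Yᵀ * M1 X₁ * Y)⁻¹
      = (Yᵀ * N1 X₁ X₂ * Y)⁻¹ * (Yᵀ * Mm X₁ X₂ * Y) * (Yᵀ * M1 X₁ * Y)⁻¹ := by
    rw [hdiff, Matrix.mul_sub, Matrix.sub_mul, Matrix.mul_assoc ((Yᵀ * N1 X₁ X₂ * Y)⁻¹),
      Matrix.mul_nonsing_inv _ hAdet, Matrix.mul_one, Matrix.nonsing_inv_mul _ hBdet,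
      Matrix.one_mul]
  have hUD : IsUnit (Dhat Y X₁ X₂) := by
    rw [hDhat, hfac]
    refine auxIsUnitSmul _ ht _ ?_
    refine IsUnit.mul (IsUnit.mul ?_ hUC) ?_
    · exact isUnit_iff_exists.mpr
        ⟨Yᵀ * N1 X₁ X₂ * Y, Matrix.nonsing_inv_mul _ hBdet, Matrix.mul_nonsing_inv _ hBdet⟩
    · exact isUnit_iff_exists.mpr
        ⟨Yᵀ * M1 X₁ * Y, Matrix.nonsing_inv_mul _ hAdet, Matrix.mul_nonsing_inv _ hAdet⟩
  have hDdet := (Matrix.isUnit_iff_isUnit_det _).mp hUD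
  have hDD : Dhat Y X₁ X₂ * (Dhat Y X₁ X₂)⁻¹ = 1 := Matrix.mul_nonsing_inv _ hDdet
  -- goal 6
  have g6 : C1 Y X₁ X₂ * (C1 Y X₁ X₂)ᵀ = (T : ℝ)⁻¹ • Dhat Y X₁ X₂ := by
    rw [eC, hDhat, smul_smul, inv_mul_cancel₀ ht, one_smul]
  -- goal 7
  have hPsi : Psi0 Y X₁ X₂ = (C1 Y X₁ X₂)ᵀ * (Dhat Y X₁ X₂)⁻¹ * C1 Y X₁ X₂ := rfl
  have g7 : C1 Y X₁ X₂ * Psi0 Y X₁ X₂ = (T : ℝ)⁻¹ • C1 Y X₁ X₂ := by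
    calc C1 Y X₁ X₂ * Psi0 Y X₁ X₂
        = (C1 Y X₁ X₂ * (C1 Y X₁ X₂)ᵀ) * (Dhat Y X₁ X₂)⁻¹ * C1 Y X₁ X₂ := by
          rw [hPsi]; simp only [Matrix.mul_assoc]
      _ = (T : ℝ)⁻¹ • C1 Y X₁ X₂ := by
          rw [g6, Matrix.smul_mul, Matrix.smul_mul, hDD, Matrix.one_mul]
  -- goal 8
  have g8 : Psi0 Y X₁ X₂ * Psi0 Y X₁ X₂ = (T : ℝ)⁻¹ • Psi0 Y X₁ X₂ := by
    calc Psi0 Y X₁ X₂ * Psi0 Y X₁ X₂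
        = (C1 Y X₁ X₂)ᵀ * (Dhat Y X₁ X₂)⁻¹ * (C1 Y X₁ X₂ * Psi0 Y X₁ X₂) := by
          rw [hPsi]; simp only [Matrix.mul_assoc]
      _ = (C1 Y X₁ X₂)ᵀ * (Dhat Y X₁ X₂)⁻¹ * ((T : ℝ)⁻¹ • C1 Y X₁ X₂) := by rw [g7]
      _ = (T : ℝ)⁻¹ • Psi0 Y X₁ X₂ := by rw [Matrix.mul_smul, hPsi]
  refine ⟨e11.trans hLS.symm, e12.trans hLS.symm, e21.trans hLS.symm, e22.trans hIV.symm,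
    ?_, ?_, g7, g8⟩
  · rw [eC, smul_sub, hLS, hIV]
  · exact g6
end
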